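/- For a Bell-diagonal two-qubit state ρ with correlation coefficients c₁, c₂, c₃ and c = max(|c₁|,|c₂|,|c₃|) ≤ 1, the quantum mutual information equals I(ρ) = 2 + Σ_{k=0}^{3} λ_k log₂ λ_k where λ_k are the eigenvalues of ρ, and the quantity C(ρ) = ((1−c)/2)log₂(1−c) + ((1+c)/2)log₂(1+c) satisfies 0 ≤ C(ρ) ≤ I(ρ). -/

import Mathlib

open Matrix BigOperators Kronecker ComplexOrder

noncomputable def pauliX : Matrix (Fin 2) (Fin 2) ℂ := !![0, 1; 1, 0]
noncomputable def pauliY : Matrix (Fin 2) (Fin 2) ℂ := !![0, -Complex.I; Complex.I, 0]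
noncomputable def pauliZ : Matrix (Fin 2) (Fin 2) ℂ := !![1, 0; 0, -1]

noncomputable def bellDiag (c₁ c₂ c₃ : ℝ) :
    Matrix (Fin 2 × Fin 2) (Fin 2 × Fin 2) ℂ :=
  (1 / 4 : ℂ) • ((1 : Matrix (Fin 2 × Fin 2) (Fin 2 × Fin 2) ℂ)
    + (c₁ : ℂ) • (pauliX ⊗ₖ pauliX) + (c₂ : ℂ) • (pauliY ⊗ₖ pauliY)
    + (c₃ : ℂ) • (pauliZ ⊗ₖ pauliZ))

noncomputable def ptraceB {m n : ℕ} (ρ : Matrix (Fin m × Fin n) (Fin m × Fin n) ℂ) :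
    Matrix (Fin m) (Fin m) ℂ :=
  Matrix.of fun i k => ∑ j : Fin n, ρ (i, j) (k, j)

noncomputable def ptraceA {m n : ℕ} (ρ : Matrix (Fin m × Fin n) (Fin m × Fin n) ℂ) :
    Matrix (Fin n) (Fin n) ℂ :=
  Matrix.of fun j l => ∑ i : Fin m, ρ (i, j) (i, l)

/-- Base-2 von Neumann entropy via eigenvalues (convention `0 log₂ 0 = 0`). -/
noncomputable def vnEntropy {n : Type*} [Fintype n] [DecidableEq n]
    {M : Matrix n n ℂ} (h : M.IsHermitian) : ℝ :=
  -∑ i, h.eigenvalues i * Real.logb 2 (h.eigenvalues i)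

/-! ### Auxiliary lemmas -/

section Aux

open Polynomial

lemma charpoly_conj_units {n : Type*} [Fintype n] [DecidableEq n]
    (V W D : Matrix n n ℂ) (hVW : V * W = 1) :
    (V * D * W).charpoly = D.charpoly := by
  have hsc : (scalar n (X : ℂ[X])) = (X : ℂ[X]) • (1 : Matrix n n ℂ[X]) := by
    rw [scalar_apply, smul_eq_diagonal_mul]; simp
  have hmap1 : ((1 : Matrix n n ℂ).map C) = (1 : Matrix n n ℂ[X]) := by simp
  have key : charmatrix (V * D * W) = V.map C * charmatrix D * W.map C := by
    unfold charmatrix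
    rw [Matrix.mul_sub, Matrix.sub_mul]
    congr 1
    · rw [hsc, Matrix.mul_smul, Matrix.smul_mul, mul_one, ← Matrix.map_mul, hVW, hmap1]
    · simp [RingHom.mapMatrix_apply, Matrix.map_mul]
  have h1 : (V.map (C : ℂ →+* ℂ[X]) : Matrix n n ℂ[X]).det * (W.map C).det = 1 := by
    rw [← det_mul, ← Matrix.map_mul, hVW, hmap1, det_one]
  rw [Matrix.charpoly, Matrix.charpoly, key, det_mul, det_mul]
  calc (V.map ⇑C).det * (charmatrix D).det * (W.map ⇑C).det
      = (charmatrix D).det * ((V.map ⇑C).det * (W.map ⇑C).det) := by ring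
    _ = (charmatrix D).det := by rw [h1, mul_one]

lemma charpoly_diag {n : Type*} [Fintype n] [DecidableEq n] (d : n → ℂ) :
    (diagonal d).charpoly = ∏ i, (X - C (d i)) := by
  rw [Matrix.charpoly]
  have : charmatrix (diagonal d) = diagonal (fun i => X - C (d i)) := by
    ext i j
    by_cases h : i = j
    · subst h; simp [charmatrix_apply_eq]
    · simp [charmatrix_apply_ne _ _ _ h, diagonal_apply_ne _ h]
  rw [this, det_diagonal]

lemma herm_charpoly {n : Type*} [Fintype n] [DecidableEq n] {M : Matrix n n ℂ}
    (h : M.IsHermitian) : M.charpoly = ∏ i, (X - C ((h.eigenvalues i : ℝ) : ℂ)) := by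
  have hspec := h.spectral_theorem
  have := congrArg Matrix.charpoly hspec
  rw [this, Unitary.conjStarAlgAut_apply, charpoly_conj_units _ _ _ ((Matrix.mem_unitaryGroup_iff).mp
    (h.eigenvectorUnitary).2), charpoly_diag]
  rfl

lemma scalar_eig {n : Type*} [Fintype n] [DecidableEq n] {M : Matrix n n ℂ}
    (h : M.IsHermitian) (a : ℝ) (hM : M = (a : ℂ) • (1 : Matrix n n ℂ)) (i : n) :
    h.eigenvalues i = a := by
  have h2 : star (h.eigenvectorUnitary : Matrix n n ℂ) * M
      * (h.eigenvectorUnitary : Matrix n n ℂ) = (a:ℂ) • 1 := by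
    have := congrArg (fun N => star (h.eigenvectorUnitary : Matrix n n ℂ) * N
      * (h.eigenvectorUnitary : Matrix n n ℂ)) hM
    try simp only at this
    rw [this, Matrix.mul_smul, Matrix.smul_mul, mul_one]
    congr 1
    exact (Matrix.UnitaryGroup.star_mul_self _)
  have h1 := (h.conjStarAlgAut_star_eigenvectorUnitary).symm.trans
    ((Unitary.conjStarAlgAut_star_apply _ _).trans h2)
  have h3 := congrArg (fun N => N i i) h1
  simp only [diagonal_apply_eq, Function.comp_apply, Matrix.smul_apply,
    Matrix.one_apply_eq, smul_eq_mul, mul_one] at h3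
  exact RCLike.ofReal_inj.mp h3

lemma prod_roots {α : Type*} [Fintype α] (g : α → ℝ) :
    (∏ i, ((X : ℂ[X]) - C ((g i : ℝ) : ℂ))).roots
      = Multiset.map (fun i => ((g i : ℝ) : ℂ)) Finset.univ.val := by
  have e : ∏ i, ((X : ℂ[X]) - C ((g i : ℝ) : ℂ))
      = ((Finset.univ.val.map (fun i => ((g i : ℝ) : ℂ))).map (fun a => X - C a)).prod := by
    rw [Multiset.map_map]; rfl
  rw [e, Polynomial.roots_multiset_prod_X_sub_C]

lemma sum_F_of_multiset_eq {α β : Type*} [Fintype α] [Fintype β] (f : α → ℝ) (g : β → ℝ)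
    (hfg : Multiset.map f Finset.univ.val = Multiset.map g Finset.univ.val) (F : ℝ → ℝ) :
    ∑ i, F (f i) = ∑ j, F (g j) := by
  have h2 : Multiset.map (F ∘ f) Finset.univ.val = Multiset.map (F ∘ g) Finset.univ.val := by
    rw [← Multiset.map_map, hfg, Multiset.map_map]
  calc ∑ i, F (f i) = (Multiset.map (F ∘ f) Finset.univ.val).sum := rfl
    _ = (Multiset.map (F ∘ g) Finset.univ.val).sum := by rw [h2]
    _ = ∑ j, F (g j) := rfl

noncomputable def bellV : Matrix (Fin 2 × Fin 2) (Fin 2 × Fin 2) ℂ :=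
  Matrix.of fun i k =>
    (![![![![1,0],![0,1]], ![![0,1],![1,0]]],
       ![![![0,1],![-1,0]], ![![1,0],![0,-1]]]] : Fin 2 → Fin 2 → Fin 2 → Fin 2 → ℂ)
      i.1 i.2 k.1 k.2

noncomputable def bellW : Matrix (Fin 2 × Fin 2) (Fin 2 × Fin 2) ℂ := (1/2 : ℂ) • bellVᵀ

noncomputable def bellLam (c₁ c₂ c₃ : ℝ) : Fin 2 × Fin 2 → ℝ := fun k =>
  (![![(1+c₁-c₂+c₃)/4, (1+c₁+c₂-c₃)/4], ![(1-c₁-c₂-c₃)/4, (1-c₁+c₂+c₃)/4]]) k.1 k.2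

lemma bellVW : bellV * bellW = 1 := by
  ext ⟨a,b⟩ ⟨c,e⟩
  simp only [mul_apply, Fintype.sum_prod_type, Fin.sum_univ_two, bellV, bellW,
    Matrix.smul_apply, Matrix.transpose_apply, Matrix.of_apply, Matrix.one_apply]
  fin_cases a <;> fin_cases b <;> fin_cases c <;> fin_cases e <;>
    norm_num [Matrix.cons_val_zero, Matrix.cons_val_one, Prod.ext_iff]

lemma bell_decomp (c₁ c₂ c₃ : ℝ) :
    bellDiag c₁ c₂ c₃ =
      bellV * Matrix.diagonal (fun k => ((bellLam c₁ c₂ c₃ k : ℝ) : ℂ)) * bellW := by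
  ext ⟨a,b⟩ ⟨c,e⟩
  simp only [mul_apply, Fintype.sum_prod_type, Fin.sum_univ_two, bellV, bellW, bellLam,
    bellDiag, pauliX, pauliY, pauliZ, Matrix.smul_apply, Matrix.transpose_apply,
    Matrix.of_apply, Matrix.one_apply, Matrix.add_apply, Matrix.diagonal_apply,
    Matrix.kroneckerMap_apply, Prod.ext_iff, smul_eq_mul]
  fin_cases a <;> fin_cases b <;> fin_cases c <;> fin_cases e <;>
    norm_num [Matrix.cons_val_zero, Matrix.cons_val_one] <;> ring

lemma bell_multiset (c₁ c₂ c₃ : ℝ) (h : (bellDiag c₁ c₂ c₃).IsHermitian) :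
    Multiset.map h.eigenvalues Finset.univ.val
      = Multiset.map (bellLam c₁ c₂ c₃) Finset.univ.val := by
  have e1 := herm_charpoly h
  have e2 : (bellDiag c₁ c₂ c₃).charpoly
      = ∏ k, ((X : ℂ[X]) - C ((bellLam c₁ c₂ c₃ k : ℝ) : ℂ)) := by
    rw [congrArg Matrix.charpoly (bell_decomp c₁ c₂ c₃),
      charpoly_conj_units _ _ _ bellVW, charpoly_diag]
  have e3 : Multiset.map (fun i => ((h.eigenvalues i : ℝ) : ℂ)) Finset.univ.val
      = Multiset.map (fun k => ((bellLam c₁ c₂ c₃ k : ℝ) : ℂ)) Finset.univ.val := by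
    rw [← prod_roots h.eigenvalues, ← prod_roots (bellLam c₁ c₂ c₃), ← e1, ← e2]
  apply Multiset.map_injective (Complex.ofReal_injective)
  rw [Multiset.map_map, Multiset.map_map]
  exact e3

lemma vn_half {M : Matrix (Fin 2) (Fin 2) ℂ} (hM : M.IsHermitian)
    (hMeq : M = (((1:ℝ)/2 : ℝ) : ℂ) • 1) : vnEntropy hM = 1 := by
  have he := scalar_eig hM (1/2) hMeq
  simp only [vnEntropy, he, Fin.sum_univ_two]
  have : Real.logb 2 ((1:ℝ)/2) = -1 := by
    rw [one_div, Real.logb_inv, Real.logb_self_eq_one (by norm_num : (1:ℝ) < 2)]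
  rw [this]; norm_num

lemma ptB_eq (c₁ c₂ c₃ : ℝ) :
    ptraceB (bellDiag c₁ c₂ c₃) = (((1:ℝ)/2 : ℝ) : ℂ) • 1 := by
  ext i k
  simp only [ptraceB, bellDiag, pauliX, pauliY, pauliZ, Matrix.of_apply, Fin.sum_univ_two,
    Matrix.smul_apply, Matrix.add_apply, Matrix.one_apply, Matrix.kroneckerMap_apply,
    Prod.ext_iff, smul_eq_mul]
  fin_cases i <;> fin_cases k <;>
    norm_num [Matrix.cons_val_zero, Matrix.cons_val_one] <;> ring

lemma ptA_eq (c₁ c₂ c₃ : ℝ) :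
    ptraceA (bellDiag c₁ c₂ c₃) = (((1:ℝ)/2 : ℝ) : ℂ) • 1 := by
  ext i k
  simp only [ptraceA, bellDiag, pauliX, pauliY, pauliZ, Matrix.of_apply, Fin.sum_univ_two,
    Matrix.smul_apply, Matrix.add_apply, Matrix.one_apply, Matrix.kroneckerMap_apply,
    Prod.ext_iff, smul_eq_mul]
  fin_cases i <;> fin_cases k <;>
    norm_num [Matrix.cons_val_zero, Matrix.cons_val_one] <;> ring

lemma pairL (a b : ℝ) (ha : 0 ≤ a) (hb : 0 ≤ b) :
    (a + b) * Real.logb 2 (a + b) - (a + b) ≤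
      a * Real.logb 2 a + b * Real.logb 2 b := by
  have hl2 : (0:ℝ) < Real.log 2 := Real.log_pos (by norm_num)
  rcases eq_or_lt_of_le ha with h | ha'
  · rw [← h]; simp; nlinarith
  rcases eq_or_lt_of_le hb with h | hb'
  · rw [← h]; simp; nlinarith
  set s := a + b with hs
  have hs' : 0 < s := by positivity
  have k1 : 1 - (2*a/s)⁻¹ ≤ Real.log (2*a/s) :=
    Real.one_sub_inv_le_log_of_pos (by positivity)
  have k2 : 1 - (2*b/s)⁻¹ ≤ Real.log (2*b/s) :=
    Real.one_sub_inv_le_log_of_pos (by positivity)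
  have e1 : Real.log (2*a/s) = Real.log 2 + Real.log a - Real.log s := by
    rw [Real.log_div (by positivity) (by positivity), Real.log_mul (by norm_num) (by positivity)]
  have e2 : Real.log (2*b/s) = Real.log 2 + Real.log b - Real.log s := by
    rw [Real.log_div (by positivity) (by positivity), Real.log_mul (by norm_num) (by positivity)]
  have i1 : a - s/2 ≤ a * Real.log (2*a/s) := by
    have h1 := mul_le_mul_of_nonneg_left k1 ha
    have ha2 : a * (1 - (2*a/s)⁻¹) = a - s/2 := by field_simp
    linarith
  have i2 : b - s/2 ≤ b * Real.log (2*b/s) := by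
    have h1 := mul_le_mul_of_nonneg_left k2 hb
    have hb2 : b * (1 - (2*b/s)⁻¹) = b - s/2 := by field_simp
    linarith
  have key : s * Real.log s - s * Real.log 2 ≤ a * Real.log a + b * Real.log b := by
    rw [e1] at i1; rw [e2] at i2
    have hspl1 : s * Real.log s = a * Real.log s + b * Real.log s := by rw [hs]; ring
    have hspl2 : s * Real.log 2 = a * Real.log 2 + b * Real.log 2 := by rw [hs]; ring
    have hs0 : a - s/2 + (b - s/2) = 0 := by rw [hs]; ring
    linarith
  simp only [Real.logb]
  have lhs_eq : s * (Real.log s / Real.log 2) - s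
      = (s * Real.log s - s * Real.log 2) / Real.log 2 := by
    field_simp
  have rhs_eq : a * (Real.log a / Real.log 2) + b * (Real.log b / Real.log 2)
      = (a * Real.log a + b * Real.log b) / Real.log 2 := by
    field_simp
  rw [lhs_eq, rhs_eq]
  gcongr

lemma Cnonneg (c : ℝ) (h0 : 0 ≤ c) (h1 : c ≤ 1) :
    0 ≤ (1 - c) / 2 * Real.logb 2 (1 - c) + (1 + c) / 2 * Real.logb 2 (1 + c) := by
  have hl2 : (0:ℝ) < Real.log 2 := Real.log_pos (by norm_num)
  have t2 : c ≤ (1 + c) * Real.log (1 + c) := by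
    have hp : (0:ℝ) < 1 + c := by linarith
    have := Real.one_sub_inv_le_log_of_pos hp
    have h1' := mul_le_mul_of_nonneg_left this hp.le
    have : (1+c) * (1 - (1+c)⁻¹) = c := by field_simp; ring
    linarith
  have t1 : -c ≤ (1 - c) * Real.log (1 - c) := by
    rcases eq_or_lt_of_le h1 with h | h
    · subst h; norm_num
    · have hp : (0:ℝ) < 1 - c := by linarith
      have := Real.one_sub_inv_le_log_of_pos hp
      have h1' := mul_le_mul_of_nonneg_left this hp.le
      have : (1-c) * (1 - (1-c)⁻¹) = -c := by field_simp; ring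
      linarith
  simp only [Real.logb]
  have : (1 - c) / 2 * (Real.log (1 - c) / Real.log 2)
      + (1 + c) / 2 * (Real.log (1 + c) / Real.log 2)
      = ((1-c) * Real.log (1-c) + (1+c) * Real.log (1+c)) / (2 * Real.log 2) := by
    field_simp
  rw [this]
  apply div_nonneg (by linarith) (by positivity)

lemma Lhalf (y : ℝ) (hy : 0 ≤ y) :
    (y/2) * Real.logb 2 (y/2) = (y/2) * (Real.logb 2 y - 1) := by
  rcases eq_or_lt_of_le hy with h | h
  · rw [← h]; norm_num
  · rw [Real.logb_div h.ne' (by norm_num), Real.logb_self_eq_one (by norm_num : (1:ℝ) < 2)]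

end Aux

theorem bellDiag_mutual_information_and_classical_correlation (c₁ c₂ c₃ : ℝ)
    (hpsd : (bellDiag c₁ c₂ c₃).PosSemidef) (htr : (bellDiag c₁ c₂ c₃).trace = 1)
    (h : (bellDiag c₁ c₂ c₃).IsHermitian)
    (hA : (ptraceB (bellDiag c₁ c₂ c₃)).IsHermitian)
    (hB : (ptraceA (bellDiag c₁ c₂ c₃)).IsHermitian)
    (c : ℝ) (hc : c = max |c₁| (max |c₂| |c₃|)) (hc1 : c ≤ 1)
    (C I : ℝ)
    (hC : C = (1 - c) / 2 * Real.logb 2 (1 - c) + (1 + c) / 2 * Real.logb 2 (1 + c))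
    (hI : I = vnEntropy hA + vnEntropy hB - vnEntropy h)
    (lam : Fin 4 → ℝ)
    (hlam : lam = ![(1 - c₁ - c₂ - c₃) / 4, (1 + c₁ - c₂ + c₃) / 4,
                    (1 - c₁ + c₂ + c₃) / 4, (1 + c₁ + c₂ - c₃) / 4]) :
    I = 2 + ∑ k : Fin 4, lam k * Real.logb 2 (lam k) ∧ 0 ≤ C ∧ C ≤ I := by
  -- entropies of the reduced states
  have hvA : vnEntropy hA = 1 := vn_half hA (ptB_eq c₁ c₂ c₃)
  have hvB : vnEntropy hB = 1 := vn_half hB (ptA_eq c₁ c₂ c₃)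
  -- multiset of eigenvalues
  have hm := bell_multiset c₁ c₂ c₃ h
  -- entropy of the full state
  have hsum : ∑ i, (fun x => x * Real.logb 2 x) (h.eigenvalues i)
      = ∑ k, (fun x => x * Real.logb 2 x) (bellLam c₁ c₂ c₃ k) :=
    sum_F_of_multiset_eq _ _ hm (fun x => x * Real.logb 2 x)
  have hvh : vnEntropy h = -∑ k, bellLam c₁ c₂ c₃ k * Real.logb 2 (bellLam c₁ c₂ c₃ k) := by
    rw [vnEntropy]
    rw [show (∑ i, h.eigenvalues i * Real.logb 2 (h.eigenvalues i))
      = ∑ i, (fun x => x * Real.logb 2 x) (h.eigenvalues i) from rfl, hsum]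
  -- nonnegativity of the λ's
  have hnn : ∀ k, 0 ≤ bellLam c₁ c₂ c₃ k := by
    intro k
    have hmem : bellLam c₁ c₂ c₃ k ∈ Multiset.map (bellLam c₁ c₂ c₃) Finset.univ.val :=
      Multiset.mem_map_of_mem _ (Finset.mem_univ k)
    rw [← hm] at hmem
    obtain ⟨i, _, hi⟩ := Multiset.mem_map.mp hmem
    rw [← hi]
    exact hpsd.eigenvalues_nonneg i
  -- explicit λ values
  set A0 := (1 - c₁ - c₂ - c₃) / 4 with hA0
  set A1 := (1 + c₁ - c₂ + c₃) / 4 with hA1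
  set A2 := (1 - c₁ + c₂ + c₃) / 4 with hA2
  set A3 := (1 + c₁ + c₂ - c₃) / 4 with hA3
  have hb00 : bellLam c₁ c₂ c₃ (0,0) = A1 := rfl
  have hb01 : bellLam c₁ c₂ c₃ (0,1) = A3 := rfl
  have hb10 : bellLam c₁ c₂ c₃ (1,0) = A0 := rfl
  have hb11 : bellLam c₁ c₂ c₃ (1,1) = A2 := rfl
  have hn0 : 0 ≤ A0 := hb10 ▸ hnn (1,0)
  have hn1 : 0 ≤ A1 := hb00 ▸ hnn (0,0)
  have hn2 : 0 ≤ A2 := hb11 ▸ hnn (1,1)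
  have hn3 : 0 ≤ A3 := hb01 ▸ hnn (0,1)
  set L : ℝ → ℝ := fun x => x * Real.logb 2 x with hL
  have hsum2 : ∑ k, bellLam c₁ c₂ c₃ k * Real.logb 2 (bellLam c₁ c₂ c₃ k)
      = L A0 + L A1 + L A2 + L A3 := by
    rw [Fintype.sum_prod_type, Fin.sum_univ_two, Fin.sum_univ_two, Fin.sum_univ_two,
      hb00, hb01, hb10, hb11]
    ring
  have hIfor : I = 2 + (L A0 + L A1 + L A2 + L A3) := by
    rw [hI, hvA, hvB, hvh, hsum2]; ring
  -- first conjunct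
  have hfirst : I = 2 + ∑ k : Fin 4, lam k * Real.logb 2 (lam k) := by
    rw [hIfor, hlam, Fin.sum_univ_four]
    simp only [Matrix.cons_val_zero, Matrix.cons_val_one, Matrix.head_cons,
      Matrix.cons_val_two, Matrix.tail_cons, Matrix.cons_val_three]
    try rw [hL]
    try ring
  -- bounds on |cᵢ|
  have habs1 : |c₁| ≤ c := by rw [hc]; exact le_max_left _ _
  have habs2 : |c₂| ≤ c := by rw [hc]; exact le_trans (le_max_left _ _) (le_max_right _ _)
  have habs3 : |c₃| ≤ c := by rw [hc]; exact le_trans (le_max_right _ _) (le_max_right _ _)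
  have hc0 : 0 ≤ c := le_trans (abs_nonneg c₁) habs1
  -- C ≥ 0
  have hCnn : 0 ≤ C := by rw [hC]; exact Cnonneg c hc0 hc1
  -- key inequality, for each pairing
  have key : ∀ x a b a' b' : ℝ, 0 ≤ a → 0 ≤ b → 0 ≤ a' → 0 ≤ b' →
      a + b = (1 - x)/2 → a' + b' = (1 + x)/2 → -1 ≤ x → x ≤ 1 →
      (1 - x) / 2 * Real.logb 2 (1 - x) + (1 + x) / 2 * Real.logb 2 (1 + x)
        ≤ 2 + (L a + L b + L a' + L b') := by
    intro x a b a' b' ha hb ha' hb' hab hab' hx1 hx2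
    have p1 := pairL a b ha hb
    have p2 := pairL a' b' ha' hb'
    rw [hab] at p1; rw [hab'] at p2
    have e1 : ((1-x)/2) * Real.logb 2 ((1-x)/2) = ((1-x)/2) * (Real.logb 2 (1-x) - 1) := by
      have := Lhalf (1-x) (by linarith)
      simpa using this
    have e2 : ((1+x)/2) * Real.logb 2 ((1+x)/2) = ((1+x)/2) * (Real.logb 2 (1+x) - 1) := by
      have := Lhalf (1+x) (by linarith)
      simpa using this
    rw [e1] at p1; rw [e2] at p2
    simp only [hL]
    linarith [p1, p2]
  have hx1 := abs_le.mp (habs1.trans hc1)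
  have hx2 := abs_le.mp (habs2.trans hc1)
  have hx3 := abs_le.mp (habs3.trans hc1)
  -- three instantiations
  have key1 : (1 - c₁) / 2 * Real.logb 2 (1 - c₁) + (1 + c₁) / 2 * Real.logb 2 (1 + c₁) ≤ I := by
    rw [hIfor]
    have := key c₁ A0 A2 A1 A3 hn0 hn2 hn1 hn3 (by rw [hA0, hA2]; ring) (by rw [hA1, hA3]; ring)
      hx1.1 hx1.2
    linarith
  have key2 : (1 - c₂) / 2 * Real.logb 2 (1 - c₂) + (1 + c₂) / 2 * Real.logb 2 (1 + c₂) ≤ I := by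
    rw [hIfor]
    have := key c₂ A0 A1 A2 A3 hn0 hn1 hn2 hn3 (by rw [hA0, hA1]; ring) (by rw [hA2, hA3]; ring)
      hx2.1 hx2.2
    linarith
  have key3 : (1 - c₃) / 2 * Real.logb 2 (1 - c₃) + (1 + c₃) / 2 * Real.logb 2 (1 + c₃) ≤ I := by
    rw [hIfor]
    have := key c₃ A0 A3 A1 A2 hn0 hn3 hn1 hn2 (by rw [hA0, hA3]; ring) (by rw [hA1, hA2]; ring)
      hx3.1 hx3.2
    linarith
  -- now C ≤ I by cases on which |cᵢ| is the max
  have hCI : C ≤ I := by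
    have habs_eq : c = |c₁| ∨ c = |c₂| ∨ c = |c₃| := by
      rcases max_choice |c₁| (max |c₂| |c₃|) with h1 | h1
      · left; rw [hc, h1]
      · rcases max_choice |c₂| |c₃| with h2 | h2
        · right; left; rw [hc, h1, h2]
        · right; right; rw [hc, h1, h2]
    have docase : ∀ x : ℝ, c = |x| →
        ((1 - x) / 2 * Real.logb 2 (1 - x) + (1 + x) / 2 * Real.logb 2 (1 + x) ≤ I) → C ≤ I := by
      intro x hcx keyx
      rcases abs_cases x with ⟨hax, _⟩ | ⟨hax, _⟩
      · rw [hC, hcx, hax]; exact keyx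
      · rw [hC, hcx, hax]
        have e1 : (1:ℝ) - -x = 1 + x := by ring
        have e2 : (1:ℝ) + -x = 1 - x := by ring
        rw [e1, e2]
        linarith [keyx]
    rcases habs_eq with h1 | h1 | h1
    · exact docase c₁ h1 key1
    · exact docase c₂ h1 key2
    · exact docase c₃ h1 key3
  exact ⟨hfirst, hCnn, hCI⟩
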